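/- Let C be a unary covering of a finite nonempty set U and define cl_C(X) = ⋂{S : SL(S) = S and X ⊆ S} for X ⊆ U. Then for every x ∈ U, cl_C({x}) = N(x), the neighborhood of x. -/

import Mathlib

open Set

/-- A covering of a finite nonempty universe `α`: a family of nonempty subsets whose union is everything. -/
def IsCovering {α : Type*} (C : Set (Set α)) : Prop :=
  (∀ K ∈ C, K.Nonempty) ∧ ⋃₀ C = Set.univ

/-- The second type of covering lower approximation. -/
def SL {α : Type*} (C : Set (Set α)) (X : Set α) : Set α :=
  ⋃₀ {K | K ∈ C ∧ K ⊆ X}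

/-- The second type of covering upper approximation. -/
def SH {α : Type*} (C : Set (Set α)) (X : Set α) : Set α :=
  ⋃₀ {K | K ∈ C ∧ (K ∩ X).Nonempty}

/-- The minimal description of a point. -/
def Md {α : Type*} (C : Set (Set α)) (x : α) : Set (Set α) :=
  {K | K ∈ C ∧ x ∈ K ∧ ∀ S ∈ C, x ∈ S → S ⊆ K → S = K}

/-- A covering is unary if every point has exactly one element in its minimal description. -/
def Unary {α : Type*} (C : Set (Set α)) : Prop :=
  ∀ x : α, ∃! K, K ∈ Md C x

/-- The neighborhood of a point. -/
def Nbhd {α : Type*} (C : Set (Set α)) (x : α) : Set α :=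
  ⋂₀ {K | K ∈ C ∧ x ∈ K}

/-- The indiscernible neighborhood of a point. -/
def IndNbhd {α : Type*} (C : Set (Set α)) (x : α) : Set α :=
  ⋃₀ {K | K ∈ C ∧ x ∈ K}

/-- A member of the covering is reducible if it is a union of other members. -/
def Reducible {α : Type*} (C : Set (Set α)) (K : Set α) : Prop :=
  ∃ D ⊆ C \ {K}, K = ⋃₀ D

/-- The reduct of a covering: its irreducible members. -/
def reduct {α : Type*} (C : Set (Set α)) : Set (Set α) :=
  {K | K ∈ C ∧ ¬ Reducible C K}

/-- The closure operator induced by the fixed point family of `SL`. -/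
def clC {α : Type*} (C : Set (Set α)) (X : Set α) : Set α :=
  ⋂₀ {S | SL C S = S ∧ X ⊆ S}

lemma exists_md {α : Type*} [Fintype α] (C : Set (Set α)) (x : α)
    (K : Set α) (hK : K ∈ C) (hx : x ∈ K) : ∃ M ∈ Md C x, M ⊆ K := by
  set T : Set (Set α) := {S | S ∈ C ∧ x ∈ S ∧ S ⊆ K} with hT
  have hTfin : T.Finite := Set.toFinite T
  have hTne : T.Nonempty := ⟨K, hK, hx, subset_rfl⟩
  obtain ⟨M, hM, hmin⟩ := Set.Finite.exists_minimal hTfin hTne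
  refine ⟨M, ⟨hM.1, hM.2.1, ?_⟩, hM.2.2⟩
  intro S hS hxS hSM
  exact Set.Subset.antisymm hSM (hmin ⟨hS, hxS, hSM.trans hM.2.2⟩ hSM)

theorem stmt_2 {α : Type*} [Fintype α] [Nonempty α] (C : Set (Set α))
    (hC : IsCovering C) (hU : Unary C) (x : α) :
    clC C {x} = Nbhd C x := by
  obtain ⟨M, hM, huniq⟩ := hU x
  have hMC : M ∈ C := hM.1
  have hxM : x ∈ M := hM.2.1
  -- M ⊆ every K ∈ C containing x
  have hMsub : ∀ K ∈ C, x ∈ K → M ⊆ K := by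
    intro K hK hxK
    obtain ⟨M', hM', hM'K⟩ := exists_md C x K hK hxK
    rwa [← huniq M' hM']
  have hNM : Nbhd C x = M := by
    apply Set.Subset.antisymm
    · exact Set.sInter_subset_of_mem ⟨hMC, hxM⟩
    · exact fun y hy => Set.subset_sInter (fun K hK => hMsub K hK.1 hK.2) hy
  rw [hNM]
  apply Set.Subset.antisymm
  · apply Set.sInter_subset_of_mem
    constructor
    · apply Set.Subset.antisymm
      · exact Set.sUnion_subset fun K hK => hK.2
      · exact Set.subset_sUnion_of_mem ⟨hMC, subset_rfl⟩
    · exact Set.singleton_subset_iff.mpr hxM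
  · intro y hy
    apply Set.mem_sInter.mpr
    intro S hS
    have hxS : x ∈ S := hS.2 rfl
    have : x ∈ SL C S := by rw [hS.1]; exact hxS
    obtain ⟨K, ⟨hKC, hKS⟩, hxK⟩ := this
    exact hKS (hMsub K hKC hxK hy)
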